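/- Let X be a square-integrable real random variable, R a real number, and b a real number with b ≤ R. Define Y = |X - b| + b. Then E[(Y - R)²] ≤ E[(X - R)²]. -/

import Mathlib

open MeasureTheory

theorem flooding_mse_le
    {Ω : Type*} [MeasurableSpace Ω] (μ : Measure Ω) [IsProbabilityMeasure μ]
    (X : Ω → ℝ) (hX : MemLp X 2 μ) (R b : ℝ) (hb : b ≤ R) :
    (∫ ω, ((|X ω - b| + b) - R) ^ 2 ∂μ) ≤ ∫ ω, (X ω - R) ^ 2 ∂μ := by
  have hint : Integrable (fun ω => (X ω - R) ^ 2) μ :=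
    (hX.sub (memLp_const R)).integrable_sq
  refine integral_mono_of_nonneg (Filter.Eventually.of_forall fun ω => by positivity)
    hint (Filter.Eventually.of_forall fun ω => ?_)
  have h1 : X ω - b ≤ |X ω - b| := le_abs_self _
  have h2 : (0:ℝ) ≤ R - b := by linarith
  show (|X ω - b| + b - R) ^ 2 ≤ (X ω - R) ^ 2
  nlinarith [mul_nonneg h2 (sub_nonneg.2 h1), sq_abs (X ω - b)]
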